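/- arXiv:2509.24736 — 4 statements merged into one kernel-verified Lean document; each statement's English description precedes it below -/
import Mathlib

section
/- The stopping criterion of the Bundle method certifies approximate optimality: let w be a σ-subgradient of φ at π̄, let η* > 0 and ε ≥ 0, and set M = max(0, φ(π̄)). If η*·‖w‖² + σ ≤ ε·M, then for every y ∈ ℝ^m, φ(π̄) ≤ φ(y) + ε·M + √(ε·M/η*)·‖y − π̄‖. -/
open RealInnerProductSpace

/-- The stopping criterion of the Bundle method certifies approximate optimality:
if `w` is a `σ`-subgradient of `φ` at `π̄`, `η* > 0`, `ε ≥ 0`, `M = max(0, φ(π̄))`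
and `η*‖w‖² + σ ≤ εM`, then `φ(π̄) ≤ φ(y) + εM + √(εM/η*)·‖y − π̄‖` for all `y`. -/
theorem stmt_5 {m : ℕ} (φ : EuclideanSpace ℝ (Fin m) → ℝ)
    (hφ : ConvexOn ℝ Set.univ φ)
    (πbar w : EuclideanSpace ℝ (Fin m)) (σ : ℝ) (hσ : 0 ≤ σ)
    (hw : ∀ y, φ y ≥ φ πbar + ⟪w, y - πbar⟫ - σ)
    (ηstar ε : ℝ) (hη : 0 < ηstar) (hε : 0 ≤ ε)
    (hstop : ηstar * ‖w‖ ^ 2 + σ ≤ ε * max 0 (φ πbar)) :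
    ∀ y, φ πbar ≤ φ y + ε * max 0 (φ πbar) +
      Real.sqrt (ε * max 0 (φ πbar) / ηstar) * ‖y - πbar‖ := by
  intro y
  set M := ε * max 0 (φ πbar) with hM
  have hw2 : ‖w‖ ^ 2 ≤ M / ηstar := by
    rw [le_div_iff₀ hη]
    nlinarith
  have hwle : ‖w‖ ≤ Real.sqrt (M / ηstar) := by
    have := Real.sqrt_le_sqrt hw2
    rwa [Real.sqrt_sq (norm_nonneg w)] at this
  have hσM : σ ≤ M := by nlinarith [sq_nonneg ‖w‖]
  have h1 := hw y
  have h2 : ⟪w, y - πbar⟫ ≥ -(‖w‖ * ‖y - πbar‖) := by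
    have := abs_real_inner_le_norm w (y - πbar)
    have := neg_abs_le (⟪w, y - πbar⟫ : ℝ)
    linarith [abs_real_inner_le_norm w (y - πbar)]
  have h3 : ‖w‖ * ‖y - πbar‖ ≤ Real.sqrt (M / ηstar) * ‖y - πbar‖ :=
    mul_le_mul_of_nonneg_right hwle (norm_nonneg _)
  linarith
end

section
/- Strong duality holds between the primal and dual master problems: the minimum of F over ℝ^m and the minimum of G over Δ_n are both attained, and min_{d ∈ ℝ^m} F(d) = − min_{θ ∈ Δ_n} G(θ). -/
open RealInnerProductSpace

/-- The primal master problem objective `F(d) = max_i (⟨g_i, d⟩ − α_i) + ‖d‖²/(2η)`. -/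
noncomputable def primalF {m n : ℕ} (hn : 0 < n)
    (g : Fin n → EuclideanSpace ℝ (Fin m)) (α : Fin n → ℝ) (η : ℝ)
    (d : EuclideanSpace ℝ (Fin m)) : ℝ :=
  Finset.univ.sup' (Finset.univ_nonempty_iff.mpr (Fin.pos_iff_nonempty.mp hn))
    (fun i => ⟪g i, d⟫ - α i) + ‖d‖ ^ 2 / (2 * η)

/-- The dual master problem objective `G(θ) = (η/2)‖Σ θ_i g_i‖² + Σ θ_i α_i`. -/
noncomputable def dualG {m n : ℕ}
    (g : Fin n → EuclideanSpace ℝ (Fin m)) (α : Fin n → ℝ) (η : ℝ)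
    (θ : Fin n → ℝ) : ℝ :=
  (η / 2) * ‖∑ i, θ i • g i‖ ^ 2 + ∑ i, θ i * α i

lemma inner_sum_smul_aux {m n : ℕ} (g : Fin n → EuclideanSpace ℝ (Fin m)) (θ : Fin n → ℝ)
    (d : EuclideanSpace ℝ (Fin m)) :
    ⟪(∑ i, θ i • g i : EuclideanSpace ℝ (Fin m)), d⟫ = ∑ i, θ i * ⟪g i, d⟫ := by
  rw [sum_inner]
  exact Finset.sum_congr rfl fun i _ => real_inner_smul_left _ _ _

/-- Weak duality. -/
lemma weak_dual_aux {m n : ℕ} (hn : 0 < n) (g : Fin n → EuclideanSpace ℝ (Fin m))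
    (α : Fin n → ℝ) (η : ℝ) (hη : 0 < η) (d : EuclideanSpace ℝ (Fin m))
    (θ : Fin n → ℝ) (hθ0 : ∀ i, 0 ≤ θ i) (hθ1 : ∑ i, θ i = 1) :
    - dualG g α η θ ≤ primalF hn g α η d := by
  have hne := Finset.univ_nonempty_iff.mpr (Fin.pos_iff_nonempty.mp hn)
  set s : EuclideanSpace ℝ (Fin m) := ∑ i, θ i • g i with hs
  set M := Finset.univ.sup' hne (fun i => ⟪g i, d⟫ - α i) with hMdef
  have hM : ∑ i, θ i * (⟪g i, d⟫ - α i) ≤ M := by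
    calc ∑ i, θ i * (⟪g i, d⟫ - α i) ≤ ∑ i, θ i * M :=
          Finset.sum_le_sum (fun i _ => mul_le_mul_of_nonneg_left
            (Finset.le_sup' (fun i => ⟪g i, d⟫ - α i) (Finset.mem_univ i)) (hθ0 i))
      _ = M := by rw [← Finset.sum_mul, hθ1, one_mul]
  have hexp : ∑ i, θ i * (⟪g i, d⟫ - α i) = ⟪s, d⟫ - ∑ i, θ i * α i := by
    rw [hs, inner_sum_smul_aux]
    rw [← Finset.sum_sub_distrib]
    congr 1; ext i; ring
  have hsq : ‖d + η • s‖ ^ 2 = ‖d‖ ^ 2 + 2 * η * ⟪s, d⟫ + η ^ 2 * ‖s‖ ^ 2 := by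
    rw [norm_add_sq_real, real_inner_smul_right, norm_smul, real_inner_comm d s]
    rw [Real.norm_eq_abs, mul_pow, sq_abs]
    ring
  have h0 : (0:ℝ) ≤ ‖d‖ ^ 2 + 2 * η * ⟪s, d⟫ + η ^ 2 * ‖s‖ ^ 2 := by
    rw [← hsq]; positivity
  have key : 0 ≤ ⟪s, d⟫ + ‖d‖ ^ 2 / (2 * η) + (η / 2) * ‖s‖ ^ 2 := by
    have heq : ⟪s, d⟫ + ‖d‖ ^ 2 / (2 * η) + (η / 2) * ‖s‖ ^ 2
        = (‖d‖ ^ 2 + 2 * η * ⟪s, d⟫ + η ^ 2 * ‖s‖ ^ 2) / (2 * η) := by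
      field_simp; ring
    rw [heq]
    exact div_nonneg h0 (by linarith)
  show -((η / 2) * ‖s‖ ^ 2 + ∑ i, θ i * α i) ≤ M + ‖d‖ ^ 2 / (2 * η)
  linarith [key, hexp.symm.trans_le hM]

set_option maxHeartbeats 1000000 in
/-- Strong duality holds between the primal and dual master problems: both minima are
attained and `min F = − min G`. -/
theorem stmt_7 {m n : ℕ} (hn : 0 < n)
    (g : Fin n → EuclideanSpace ℝ (Fin m)) (α : Fin n → ℝ) (hα : ∀ i, 0 ≤ α i)
    (η : ℝ) (hη : 0 < η) :
    ∃ d : EuclideanSpace ℝ (Fin m), ∃ θ : Fin n → ℝ,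
      (∀ i, 0 ≤ θ i) ∧ (∑ i, θ i = 1) ∧
      (∀ d', primalF hn g α η d ≤ primalF hn g α η d') ∧
      (∀ θ' : Fin n → ℝ, (∀ i, 0 ≤ θ' i) → (∑ i, θ' i = 1) →
        dualG g α η θ ≤ dualG g α η θ') ∧
      primalF hn g α η d = - dualG g α η θ := by
  classical
  have hne := Finset.univ_nonempty_iff.mpr (Fin.pos_iff_nonempty.mp hn)
  -- existence of dual minimizer over the compact simplex
  have hcont : Continuous (dualG g α η) := by
    unfold dualG
    apply Continuous.add
    · exact continuous_const.mul
        ((continuous_finset_sum _ (fun i _ => (continuous_apply i).smul continuous_const)).norm.pow 2)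
    · exact continuous_finset_sum _ fun i _ => (continuous_apply i).mul continuous_const
  have hnonempty : (stdSimplex ℝ (Fin n)).Nonempty := by
    refine ⟨fun j => if j = ⟨0, hn⟩ then 1 else 0, fun j => ?_, ?_⟩
    · show (0:ℝ) ≤ if j = ⟨0, hn⟩ then 1 else 0
      split <;> norm_num
    · simp
  obtain ⟨θ, hθmem, hθmin⟩ :=
    (isCompact_stdSimplex ℝ (Fin n)).exists_isMinOn hnonempty hcont.continuousOn
  obtain ⟨hθ0, hθ1⟩ := hθmem
  set s : EuclideanSpace ℝ (Fin m) := ∑ i, θ i • g i with hs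
  set Sα : ℝ := ∑ i, θ i * α i with hSα
  -- first-order optimality of θ
  have hstat : ∀ i : Fin n, 0 ≤ η * (⟪s, g i⟫ - ‖s‖ ^ 2) + α i - Sα := by
    intro i
    set A : ℝ := η * (⟪s, g i⟫ - ‖s‖ ^ 2) + α i - Sα with hA
    set C : ℝ := (η / 2) * ‖g i - s‖ ^ 2 with hC
    clear_value A C
    have hC0 : (0:ℝ) ≤ C := by rw [hC]; positivity
    have hkey : ∀ t : ℝ, 0 < t → t ≤ 1 → -(t * C) ≤ A := by
      intro t ht0 ht1
      set θ' : Fin n → ℝ := fun j => (1 - t) * θ j + t * (if j = i then 1 else 0) with hθ'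
      have hmem' : θ' ∈ stdSimplex ℝ (Fin n) := by
        constructor
        · intro j
          have := hθ0 j
          show (0:ℝ) ≤ (1 - t) * θ j + t * (if j = i then 1 else 0)
          split <;> nlinarith
        · show ∑ j, ((1 - t) * θ j + t * (if j = i then 1 else 0)) = 1
          rw [Finset.sum_add_distrib, ← Finset.mul_sum, hθ1, ← Finset.mul_sum]
          simp
      have hsum' : ∑ j, θ' j • g j = (s + t • (g i - s) : EuclideanSpace ℝ (Fin m)) := by
        have expand : ∀ j : Fin n, θ' j • g j
            = (1 - t) • (θ j • g j) + (if j = i then t • g i else 0) := by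
          intro j
          show ((1 - t) * θ j + t * (if j = i then 1 else 0)) • g j = _
          by_cases h : j = i <;> simp [h, add_smul, mul_smul]
        rw [Finset.sum_congr rfl (fun j _ => expand j), Finset.sum_add_distrib,
          ← Finset.smul_sum, ← hs]
        rw [Finset.sum_ite_eq' Finset.univ i (fun _ => t • g i), if_pos (Finset.mem_univ i)]
        module
      have hαsum' : ∑ j, θ' j * α j = (1 - t) * Sα + t * α i := by
        have expand : ∀ j : Fin n, θ' j * α j
            = (1 - t) * (θ j * α j) + (if j = i then t * α i else 0) := by
          intro j
          show ((1 - t) * θ j + t * (if j = i then 1 else 0)) * α j = _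
          by_cases h : j = i <;> simp [h] <;> ring
        rw [Finset.sum_congr rfl (fun j _ => expand j), Finset.sum_add_distrib,
          ← Finset.mul_sum, ← hSα]
        rw [Finset.sum_ite_eq' Finset.univ i (fun _ => t * α i), if_pos (Finset.mem_univ i)]
      have hle2 : dualG g α η θ ≤ dualG g α η θ' := hθmin hmem'
      have hG' : dualG g α η θ' = (η / 2) * ‖s + t • (g i - s)‖ ^ 2 + ((1 - t) * Sα + t * α i) := by
        unfold dualG
        rw [hsum', hαsum']
      have hGθ : dualG g α η θ = (η / 2) * ‖s‖ ^ 2 + Sα := rfl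
      have hnorm : ‖s + t • (g i - s)‖ ^ 2
          = ‖s‖ ^ 2 + 2 * t * ⟪s, g i - s⟫ + t ^ 2 * ‖g i - s‖ ^ 2 := by
        rw [norm_add_sq_real, real_inner_smul_right, norm_smul, Real.norm_eq_abs,
          mul_pow, sq_abs]
        ring
      have hinner : ⟪s, g i - s⟫ = ⟪s, g i⟫ - ‖s‖ ^ 2 := by
        rw [inner_sub_right, real_inner_self_eq_norm_sq]
      rw [hGθ, hG', hnorm, hinner] at hle2
      have ht' : 0 ≤ t * A + t ^ 2 * C := by
        rw [hA, hC]; nlinarith [hle2]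
      have h3 : t * 0 ≤ t * (A + t * C) := by nlinarith [ht']
      linarith [le_of_mul_le_mul_left h3 ht0]
    by_contra hneg
    push_neg at hneg
    have h1 := hkey 1 one_pos le_rfl
    have hCpos : 0 < C := by nlinarith
    have ht0 : 0 < -A / (2 * C) := div_pos (by linarith) (by linarith)
    have ht1 : -A / (2 * C) ≤ 1 := by
      rw [div_le_one (by linarith)]
      nlinarith
    have h2 := hkey (-A / (2 * C)) ht0 ht1
    have heq : -A / (2 * C) * C = -A / 2 := by field_simp
    rw [heq] at h2
    linarith
  -- the primal point
  set d : EuclideanSpace ℝ (Fin m) := (-η) • s with hd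
  set M := Finset.univ.sup' hne (fun i => ⟪g i, d⟫ - α i) with hM
  have hgd : ∀ i, ⟪g i, d⟫ = -η * ⟪s, g i⟫ := by
    intro i
    rw [hd, real_inner_smul_right, real_inner_comm]
  have hMle : M ≤ -η * ‖s‖ ^ 2 - Sα := by
    apply Finset.sup'_le
    intro i _
    rw [hgd i]
    have := hstat i
    nlinarith
  have hMge : -η * ‖s‖ ^ 2 - Sα ≤ M := by
    have havg : ∑ i, θ i * (⟪g i, d⟫ - α i) ≤ M := by
      calc ∑ i, θ i * (⟪g i, d⟫ - α i) ≤ ∑ i, θ i * M :=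
            Finset.sum_le_sum (fun i _ => mul_le_mul_of_nonneg_left
              (Finset.le_sup' (fun i => ⟪g i, d⟫ - α i) (Finset.mem_univ i)) (hθ0 i))
        _ = M := by rw [← Finset.sum_mul, hθ1, one_mul]
    have hexp : ∑ i, θ i * (⟪g i, d⟫ - α i) = -η * ‖s‖ ^ 2 - Sα := by
      have h1 : ∑ i, θ i * (⟪g i, d⟫ - α i) = ⟪s, d⟫ - Sα := by
        rw [hs, inner_sum_smul_aux, hSα, ← Finset.sum_sub_distrib]
        congr 1; ext i; ring
      rw [h1, hd, real_inner_smul_right, real_inner_self_eq_norm_sq]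
    linarith [hexp ▸ havg]
  have hMeq : M = -η * ‖s‖ ^ 2 - Sα := le_antisymm hMle hMge
  have hnd : ‖d‖ ^ 2 = η ^ 2 * ‖s‖ ^ 2 := by
    rw [hd, norm_smul, Real.norm_eq_abs, mul_pow, sq_abs, neg_sq]
  have hFeq : primalF hn g α η d = - dualG g α η θ := by
    show M + ‖d‖ ^ 2 / (2 * η) = -((η / 2) * ‖s‖ ^ 2 + Sα)
    rw [hMeq, hnd]
    field_simp
    ring
  refine ⟨d, θ, hθ0, hθ1, ?_, ?_, hFeq⟩
  · intro d'
    rw [hFeq]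
    exact weak_dual_aux hn g α η hη d' θ hθ0 hθ1
  · intro θ' h0' h1'
    exact hθmin ⟨h0', h1'⟩
end

section
/- The primal master problem solution is recovered from any dual solution: if θ* ∈ Δ_n minimizes G over Δ_n and w = Σ_{i=1}^n θ*_i g_i is the aggregated subgradient, then d* = −η·w is a global minimizer of F on ℝ^m. -/
open RealInnerProductSpace

set_option maxHeartbeats 1000000 in
/-- The primal master problem solution is recovered from any dual solution: if `θ*`
minimizes `G` over the simplex and `w = Σ θ*_i g_i`, then `d* = −η·w` is a global
minimizer of `F`. -/
theorem stmt_8 {m n : ℕ} (hn : 0 < n)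
    (g : Fin n → EuclideanSpace ℝ (Fin m)) (α : Fin n → ℝ) (hα : ∀ i, 0 ≤ α i)
    (η : ℝ) (hη : 0 < η)
    (θs : Fin n → ℝ) (hθs : ∀ i, 0 ≤ θs i) (hθs1 : ∑ i, θs i = 1)
    (hmin : ∀ θ' : Fin n → ℝ, (∀ i, 0 ≤ θ' i) → (∑ i, θ' i = 1) →
      dualG g α η θs ≤ dualG g α η θ') :
    ∀ d : EuclideanSpace ℝ (Fin m),
      primalF hn g α η ((-η) • ∑ i, θs i • g i) ≤ primalF hn g α η d := by
  intro d
  set w : EuclideanSpace ℝ (Fin m) := ∑ i, θs i • g i with hw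
  set S : ℝ := ∑ i, θs i * α i with hS
  have hne : (Finset.univ : Finset (Fin n)).Nonempty :=
    Finset.univ_nonempty_iff.mpr (Fin.pos_iff_nonempty.mp hn)
  -- optimality condition
  have key : ∀ i : Fin n, η * ‖w‖ ^ 2 + S ≤ η * ⟪g i, w⟫ + α i := by
    intro i
    by_contra hc
    push_neg at hc
    set A : ℝ := η * ⟪g i, w⟫ + α i - (η * ‖w‖ ^ 2 + S) with hA
    have hA0 : A < 0 := by simp only [hA]; linarith
    set C : ℝ := (η / 2) * ‖g i - w‖ ^ 2 with hC
    have hC0 : 0 ≤ C := by positivity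
    set t : ℝ := min 1 ((-A) / (2 * (C + 1))) with ht
    have ht0 : 0 < t := by
      apply lt_min one_pos
      apply div_pos (by linarith) (by linarith)
    have ht1 : t ≤ 1 := min_le_left _ _
    have ht2 : t ≤ (-A) / (2 * (C + 1)) := min_le_right _ _
    set θ' : Fin n → ℝ := fun j => (1 - t) * θs j + t * (if j = i then 1 else 0) with hθ'
    have h1 : ∀ j, 0 ≤ θ' j := by
      intro j
      have h0 := hθs j
      have e : θ' j = (1 - t) * θs j + t * (if j = i then 1 else 0) := rfl
      rw [e]
      by_cases h : j = i
      · rw [if_pos h, mul_one]; nlinarith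
      · rw [if_neg h, mul_zero, add_zero]; nlinarith
    have h2 : ∑ j, θ' j = 1 := by
      simp only [hθ']
      rw [Finset.sum_add_distrib, ← Finset.mul_sum, ← Finset.mul_sum, hθs1]
      simp
    have hsg : ∑ j, θ' j • g j = w + t • (g i - w) := by
      simp only [hθ', add_smul]
      rw [Finset.sum_add_distrib]
      have e1 : ∑ j, ((1 - t) * θs j) • g j = (1 - t) • w := by
        rw [hw, Finset.smul_sum]
        simp [smul_smul]
      have e2 : ∑ j, (t * (if j = i then (1:ℝ) else 0)) • g j = t • g i := by
        rw [Finset.sum_eq_single i]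
        · simp
        · intro b _ hb; simp [hb]
        · simp
      rw [e1, e2, smul_sub, sub_smul, one_smul]
      abel
    have hsα : ∑ j, θ' j * α j = (1 - t) * S + t * α i := by
      simp only [hθ', add_mul]
      rw [Finset.sum_add_distrib]
      have e1 : ∑ j, (1 - t) * θs j * α j = (1 - t) * S := by
        rw [hS, Finset.mul_sum]
        exact Finset.sum_congr rfl (fun j _ => by ring)
      have e2 : ∑ j, (t * (if j = i then (1:ℝ) else 0)) * α j = t * α i := by
        rw [Finset.sum_eq_single i]
        · simp
        · intro b _ hb; simp [hb]
        · simp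
      rw [e1, e2]
    have hm := hmin θ' h1 h2
    rw [dualG, dualG, hsg, hsα, ← hw, ← hS] at hm
    have hexp : ‖w + t • (g i - w)‖ ^ 2
        = ‖w‖ ^ 2 + 2 * (t * ⟪w, g i - w⟫) + t ^ 2 * ‖g i - w‖ ^ 2 := by
      rw [norm_add_sq_real, real_inner_smul_right, norm_smul]
      simp [abs_of_pos ht0, mul_pow]
    rw [hexp] at hm
    have hv : ⟪w, g i - w⟫ = ⟪g i, w⟫ - ‖w‖ ^ 2 := by
      rw [inner_sub_right, real_inner_self_eq_norm_sq, real_inner_comm]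
    rw [hv] at hm
    -- hm : η/2 * ‖w‖² + S ≤ η/2*(‖w‖² + 2t(⟪g i,w⟫-‖w‖²) + t²‖v‖²) + ((1-t)S + tα i)
    -- ⇒ 0 ≤ t*(A + t*C), so 0 ≤ A + t*C
    have h3 : 0 ≤ A + t * C := by nlinarith [hm, ht0]
    have h4 : t * C ≤ (-A) / 2 := by
      have h5 : t * (2 * (C + 1)) ≤ -A := (le_div_iff₀ (by linarith)).mp ht2
      nlinarith [ht0.le, hC0]
    linarith
  -- weak duality lower bound : -G(θs) ≤ F(d)
  have hlow : -((η / 2) * ‖w‖ ^ 2 + S) ≤ primalF hn g α η d := by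
    set M : ℝ := Finset.univ.sup' hne (fun i => ⟪g i, d⟫ - α i) with hM
    have hcomb : ⟪w, d⟫ - S ≤ M := by
      have e : ∑ i, θs i * (⟪g i, d⟫ - α i) = ⟪w, d⟫ - S := by
        rw [hw, sum_inner, hS]
        rw [← Finset.sum_sub_distrib]
        apply Finset.sum_congr rfl
        intro i _
        rw [real_inner_smul_left]
        ring
      rw [← e]
      calc ∑ i, θs i * (⟪g i, d⟫ - α i) ≤ ∑ i, θs i * M := by
            apply Finset.sum_le_sum
            intro i _
            exact mul_le_mul_of_nonneg_left
              (Finset.le_sup' (f := fun i => ⟪g i, d⟫ - α i) (Finset.mem_univ i)) (hθs i)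
        _ = M := by rw [← Finset.sum_mul, hθs1, one_mul]
    have hquad : -((η / 2) * ‖w‖ ^ 2) - ⟪w, d⟫ ≤ ‖d‖ ^ 2 / (2 * η) := by
      have h0 : (0:ℝ) ≤ ‖d + η • w‖ ^ 2 := sq_nonneg _
      rw [norm_add_sq_real, real_inner_smul_right, norm_smul, Real.norm_eq_abs,
        abs_of_pos hη, mul_pow, real_inner_comm] at h0
      rw [le_div_iff₀ (by linarith : (0:ℝ) < 2 * η)]
      nlinarith [h0]
    rw [primalF, ← hM]
    have : -((η / 2) * ‖w‖ ^ 2 + S) ≤ (⟪w, d⟫ - S) + ‖d‖ ^ 2 / (2 * η) := by linarith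
    linarith [hcomb]
  -- upper bound : F(d*) ≤ -G(θs)
  have hup : primalF hn g α η ((-η) • w) ≤ -((η / 2) * ‖w‖ ^ 2 + S) := by
    rw [primalF]
    have hsup : Finset.univ.sup' hne (fun i => ⟪g i, (-η) • w⟫ - α i)
        ≤ -(η * ‖w‖ ^ 2) - S := by
      apply Finset.sup'_le
      intro i _
      rw [real_inner_smul_right]
      have := key i
      linarith
    have hnorm : ‖(-η) • w‖ ^ 2 = η ^ 2 * ‖w‖ ^ 2 := by
      rw [norm_smul, mul_pow]
      simp [abs_of_pos hη, sq_abs]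
    rw [hnorm]
    have : η ^ 2 * ‖w‖ ^ 2 / (2 * η) = (η / 2) * ‖w‖ ^ 2 := by
      field_simp
    rw [this]
    have := hsup
    linarith [this]
  linarith
end

section
/- The continuous knapsack problem admits an optimal solution with at most one fractional coordinate: let K be a finite set, c ≥ 0, q : K → ℝ with q_k ≥ 0 for all k, and w : K → ℝ. Then there exists x* minimizing Σ_{k ∈ K} w_k x_k over the set { x : K → ℝ : 0 ≤ x_k ≤ q_k for all k, Σ_{k ∈ K} x_k ≤ c } such that the set { k ∈ K : 0 < x*_k and x*_k < q_k } has at most one element. -/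
lemma knap_aux {K : Type*} [DecidableEq K] (q : K → ℝ)
    (hq : ∀ k, 0 ≤ q k) (w : K → ℝ) (S : Finset K) :
    ∀ c : ℝ, 0 ≤ c →
    ∃ x : K → ℝ, (∀ k, 0 ≤ x k ∧ x k ≤ q k) ∧ (∀ k, k ∉ S → x k = 0) ∧
      (∑ k ∈ S, x k) ≤ c ∧
      (∀ x' : K → ℝ, (∀ k, 0 ≤ x' k ∧ x' k ≤ q k) → (∑ k ∈ S, x' k) ≤ c →
        ∑ k ∈ S, w k * x k ≤ ∑ k ∈ S, w k * x' k) ∧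
      {k : K | 0 < x k ∧ x k < q k}.Subsingleton := by
  induction S using Finset.strongInduction with
  | _ S ih =>
    intro c hc
    rcases S.eq_empty_or_nonempty with rfl | hne
    · exact ⟨0, fun k => ⟨le_refl _, hq k⟩, fun _ _ => rfl, by simpa using hc,
        fun x' _ _ => by simp, fun a ha b hb => absurd ha.1 (lt_irrefl 0)⟩
    obtain ⟨k, hkS, hkmin⟩ := S.exists_min_image w hne
    rcases le_or_gt 0 (w k) with hwk | hwk
    · -- all weights nonnegative on S: x = 0 is optimal
      refine ⟨0, fun k => ⟨le_refl _, hq k⟩, fun _ _ => rfl, by simpa using hc,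
        fun x' hx' hsum' => ?_, fun a ha b hb => absurd ha.1 (lt_irrefl 0)⟩
      simp only [Pi.zero_apply, mul_zero, Finset.sum_const_zero]
      exact Finset.sum_nonneg fun j hj =>
        mul_nonneg (hwk.trans (hkmin j hj)) (hx' j).1
    · -- w k < 0; greedy: fill k with m = min (q k) c, recurse
      set m : ℝ := min (q k) c with hm
      have hm0 : 0 ≤ m := le_min (hq k) hc
      have hmq : m ≤ q k := min_le_left _ _
      have hmc : m ≤ c := min_le_right _ _
      obtain ⟨y, hy, hysupp, hysum, hyopt, hyfrac⟩ :=
        ih (S.erase k) (S.erase_ssubset hkS) (c - m) (by linarith)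
      have hyk : y k = 0 := hysupp k (S.notMem_erase k)
      refine ⟨Function.update y k m, ?_, ?_, ?_, ?_, ?_⟩
      · intro j
        rcases eq_or_ne j k with rfl | hj
        · simp [hm0, hmq]
        · simpa [Function.update_of_ne hj] using hy j
      · intro j hj
        have hjk : j ≠ k := fun h => hj (h ▸ hkS)
        rw [Function.update_of_ne hjk]
        exact hysupp j (fun h => hj (Finset.mem_of_mem_erase h))
      · rw [← Finset.add_sum_erase S _ hkS, Function.update_self]
        have : ∑ j ∈ S.erase k, Function.update y k m j = ∑ j ∈ S.erase k, y j :=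
          Finset.sum_congr rfl fun j hj =>
            Function.update_of_ne (Finset.ne_of_mem_erase hj) _ _
        rw [this]; linarith
      · intro x' hx' hsum'
        -- scaling factor for x' off k
        set T : ℝ := ∑ j ∈ S.erase k, x' j with hT
        have hT0 : 0 ≤ T := Finset.sum_nonneg fun j _ => (hx' j).1
        have hsplit : x' k + T = ∑ j ∈ S, x' j := Finset.add_sum_erase S _ hkS
        have hx'k : x' k ≤ m := le_min (hx' k).2 (by linarith)
        set σ : ℝ := if T ≤ c - m then 1 else (c - m) / T with hσ
        have hσ0 : 0 ≤ σ := by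
          rw [hσ]; split
          · norm_num
          · next h => exact div_nonneg (by linarith) hT0
        have hσ1 : σ ≤ 1 := by
          rw [hσ]; split
          · norm_num
          · next h =>
            have hTpos : 0 < T := by nlinarith
            rw [div_le_one hTpos]; linarith
        have hzfeas : ∀ j, 0 ≤ σ * x' j ∧ σ * x' j ≤ q j := by
          intro j
          constructor
          · exact mul_nonneg hσ0 (hx' j).1
          · calc σ * x' j ≤ 1 * x' j := mul_le_mul_of_nonneg_right hσ1 (hx' j).1
              _ = x' j := one_mul _
              _ ≤ q j := (hx' j).2
        have hzsum : ∑ j ∈ S.erase k, σ * x' j ≤ c - m := by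
          rw [← Finset.mul_sum, ← hT, hσ]
          split
          · next h => simpa using h
          · next h =>
            have hTpos : 0 < T := by nlinarith
            rw [div_mul_cancel₀ _ (ne_of_gt hTpos)]
        have hkey := hyopt (fun j => σ * x' j) hzfeas hzsum
        -- main inequality
        have hwj : ∀ j ∈ S.erase k, w k * x' j ≤ w j * x' j := fun j hj =>
          mul_le_mul_of_nonneg_right (hkmin j (Finset.mem_of_mem_erase hj)) (hx' j).1
        have hterm : w k * T ≤ ∑ j ∈ S.erase k, w j * x' j := by
          rw [hT, Finset.mul_sum]
          exact Finset.sum_le_sum hwj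
        have hmain : σ * ∑ j ∈ S.erase k, w j * x' j ≤
            w k * x' k - w k * m + ∑ j ∈ S.erase k, w j * x' j := by
          rw [hσ]; split
          · next h =>
            have : 0 ≤ w k * x' k - w k * m := by nlinarith
            linarith
          · next h =>
            have hTpos : 0 < T := by nlinarith
            have h1 : ((c - m) / T - 1) * ∑ j ∈ S.erase k, w j * x' j ≤
                ((c - m) / T - 1) * (w k * T) := by
              apply mul_le_mul_of_nonpos_left hterm
              have : (c - m) / T < 1 := by rw [div_lt_one hTpos]; linarith
              linarith
            have h2 : ((c - m) / T - 1) * (w k * T) = w k * (c - m - T) := by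
              field_simp
            nlinarith [h1, h2]
        have hzobj : ∑ j ∈ S.erase k, w j * (σ * x' j) =
            σ * ∑ j ∈ S.erase k, w j * x' j := by
          rw [Finset.mul_sum]; exact Finset.sum_congr rfl fun j _ => by ring
        rw [← Finset.add_sum_erase S _ hkS, ← Finset.add_sum_erase S (fun j => w j * x' j) hkS,
          Function.update_self]
        have heq : ∑ j ∈ S.erase k, w j * Function.update y k m j =
            ∑ j ∈ S.erase k, w j * y j :=
          Finset.sum_congr rfl fun j hj => by
            rw [Function.update_of_ne (Finset.ne_of_mem_erase hj)]
        rw [heq]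
        rw [hzobj] at hkey
        linarith
      · -- at most one fractional coordinate
        rcases le_or_gt (q k) c with hqc | hqc
        · -- m = q k : k is not fractional
          have hmqk : m = q k := min_eq_left hqc
          intro a ha b hb
          have hak : a ≠ k := by
            rintro rfl
            rw [Set.mem_setOf_eq, Function.update_self, hmqk] at ha
            exact absurd ha.2 (lt_irrefl _)
          have hbk : b ≠ k := by
            rintro rfl
            rw [Set.mem_setOf_eq, Function.update_self, hmqk] at hb
            exact absurd hb.2 (lt_irrefl _)
          rw [Set.mem_setOf_eq, Function.update_of_ne hak] at ha
          rw [Set.mem_setOf_eq, Function.update_of_ne hbk] at hb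
          exact hyfrac ha hb
        · -- m = c < q k: remaining capacity 0, so y ≡ 0
          have hmc' : m = c := min_eq_right (le_of_lt hqc)
          have hy0 : ∀ j, y j = 0 := by
            intro j
            by_cases hj : j ∈ S.erase k
            · have := Finset.sum_nonneg (fun i (_ : i ∈ S.erase k) => (hy i).1)
              have hle : y j ≤ ∑ i ∈ S.erase k, y i :=
                Finset.single_le_sum (fun i _ => (hy i).1) hj
              have : ∑ i ∈ S.erase k, y i ≤ 0 := by rw [hmc'] at hysum; linarith
              linarith [(hy j).1, hle, this]
            · exact hysupp j hj
          intro a ha b hb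
          have hak : a = k := by
            by_contra hak
            rw [Set.mem_setOf_eq, Function.update_of_ne hak, hy0 a] at ha
            exact absurd ha.1 (lt_irrefl 0)
          have hbk : b = k := by
            by_contra hbk
            rw [Set.mem_setOf_eq, Function.update_of_ne hbk, hy0 b] at hb
            exact absurd hb.1 (lt_irrefl 0)
          rw [hak, hbk]

/-- The continuous knapsack problem admits an optimal solution with at most one
fractional coordinate. -/
theorem stmt_16 {K : Type*} [Fintype K] (c : ℝ) (hc : 0 ≤ c) (q : K → ℝ)
    (hq : ∀ k, 0 ≤ q k) (w : K → ℝ) :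
    ∃ x : K → ℝ, (∀ k, 0 ≤ x k ∧ x k ≤ q k) ∧ (∑ k, x k) ≤ c ∧
      (∀ x' : K → ℝ, (∀ k, 0 ≤ x' k ∧ x' k ≤ q k) → (∑ k, x' k) ≤ c →
        ∑ k, w k * x k ≤ ∑ k, w k * x' k) ∧
      {k : K | 0 < x k ∧ x k < q k}.Subsingleton := by
  classical
  obtain ⟨x, h1, _, h3, h4, h5⟩ := knap_aux q hq w Finset.univ c hc
  exact ⟨x, h1, h3, h4, h5⟩
end
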